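/- For n ≥ 7, 2n − 2 ≤ λ₂(Σ_n, C_n) ≤ 4n − 6, where C_n is the set of adjacent transpositions in Σ_n. -/

import Mathlib

/-- The word length of `g` with respect to a generating set `S`. -/
noncomputable def wordLen {G : Type*} [Group G] (S : Set G) (g : G) : ℕ :=
  sInf {k | ∃ l : List G, (∀ x ∈ l, x ∈ S) ∧ l.length = k ∧ l.prod = g}

/-- `λ₂(G,S) = max_{g ∈ G, s, s' ∈ S} l_S(g⁻¹ s s' g)`. -/
noncomputable def lam2 {G : Type*} [Group G] (S : Set G) : ℕ :=
  sSup {m | ∃ g : G, ∃ s ∈ S, ∃ s' ∈ S, m = wordLen S (g⁻¹ * (s * s') * g)}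

/-- The set of adjacent transpositions (Coxeter generators) in `Σ_n`. -/
def coxeterGens (n : ℕ) : Set (Equiv.Perm (Fin n)) :=
  {σ | ∃ i j : Fin n, (j : ℕ) = (i : ℕ) + 1 ∧ σ = Equiv.swap i j}

def invSet {n : ℕ} (σ : Equiv.Perm (Fin n)) : Finset (Fin n × Fin n) :=
  Finset.univ.filter fun p => p.1 < p.2 ∧ σ p.2 < σ p.1

section pieces

lemma key_pair {n : ℕ} {i j x y : Fin n} (hj : (j : ℕ) = (i : ℕ) + 1)
    (hxy : x < y) (h : Equiv.swap i j y < Equiv.swap i j x) : x = i ∧ y = j := by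
  rw [Equiv.swap_apply_def, Equiv.swap_apply_def] at h
  split_ifs at h <;>
    (refine ⟨Fin.ext ?_, Fin.ext ?_⟩ <;> simp only [Fin.ext_iff, Fin.lt_def] at * <;> omega)

lemma invSet_swap_mul_subset {n : ℕ} {i j : Fin n} (hj : (j : ℕ) = (i : ℕ) + 1)
    (σ : Equiv.Perm (Fin n)) :
    invSet (Equiv.swap i j * σ) ⊆ insert (σ⁻¹ i, σ⁻¹ j) (invSet σ) := by
  intro p hp
  rw [invSet, Finset.mem_filter] at hp
  simp only [Finset.mem_univ, true_and,
    Equiv.Perm.mul_apply] at hp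
  obtain ⟨h1, h2⟩ := hp
  by_cases hc : σ p.2 < σ p.1
  · exact Finset.mem_insert_of_mem (by simp [invSet, h1, hc])
  · have hne : σ p.1 ≠ σ p.2 := fun e => absurd (σ.injective e) (ne_of_lt h1)
    have hlt : σ p.1 < σ p.2 := lt_of_le_of_ne (not_lt.1 hc) hne
    obtain ⟨e1, e2⟩ := key_pair hj hlt h2
    have : p = (σ⁻¹ i, σ⁻¹ j) := by
      rw [Prod.ext_iff]
      constructor
      · rw [Equiv.Perm.eq_inv_iff_eq]; exact e1
      · rw [Equiv.Perm.eq_inv_iff_eq]; exact e2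
    rw [this]; exact Finset.mem_insert_self _ _

lemma invCount_prod_le {n : ℕ} : ∀ l : List (Equiv.Perm (Fin n)),
    (∀ x ∈ l, x ∈ coxeterGens n) → (invSet l.prod).card ≤ l.length := by
  intro l
  induction l with
  | nil =>
    intro _
    simp only [List.prod_nil, List.length_nil, Nat.le_zero, Finset.card_eq_zero]
    ext p
    rw [invSet, Finset.mem_filter]
    simp only [Finset.notMem_empty, iff_false, not_and,
      Equiv.Perm.one_apply, Finset.mem_univ, true_and]
    intro h1 h2
    exact absurd h2 (not_lt.2 h1.le)
  | cons a t ih =>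
    intro h
    obtain ⟨i, j, hj, rfl⟩ := h a List.mem_cons_self
    rw [List.prod_cons, List.length_cons]
    calc (invSet (Equiv.swap i j * t.prod)).card
        ≤ (insert ((t.prod)⁻¹ i, (t.prod)⁻¹ j) (invSet t.prod)).card :=
          Finset.card_le_card (invSet_swap_mul_subset hj _)
      _ ≤ (invSet t.prod).card + 1 := Finset.card_insert_le _ _
      _ ≤ t.length + 1 := by
          exact Nat.add_le_add_right (ih fun x hx => h x (List.mem_cons_of_mem _ hx)) 1


lemma swap_word_aux {n : ℕ} : ∀ d : ℕ, 0 < d → ∀ a b : Fin n, (b : ℕ) = (a : ℕ) + d →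
    ∃ l : List (Equiv.Perm (Fin n)), (∀ x ∈ l, x ∈ coxeterGens n) ∧
      l.length = 2 * d - 1 ∧ l.prod = Equiv.swap a b := by
  intro d
  induction d with
  | zero => omega
  | succ d ih =>
    intro _ a b hb
    by_cases hd : d = 0
    · subst hd
      refine ⟨[Equiv.swap a b], ?_, by simp, by simp⟩
      intro x hx
      simp only [List.mem_singleton] at hx
      exact ⟨a, b, by omega, hx⟩
    · have hd0 : 0 < d := Nat.pos_of_ne_zero hd
      have hcval : (a : ℕ) + d < n := by have := b.isLt; omega
      set c : Fin n := ⟨(a : ℕ) + d, hcval⟩ with hc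
      obtain ⟨l, hl1, hl2, hl3⟩ := ih hd0 a c rfl
      have hcb : (b : ℕ) = (c : ℕ) + 1 := by simp [hc]; omega
      have hac : a ≠ c := Fin.ne_of_val_ne (by simp [hc]; omega)
      have hab : a ≠ b := Fin.ne_of_val_ne (by omega)
      refine ⟨[Equiv.swap c b] ++ l ++ [Equiv.swap c b], ?_, ?_, ?_⟩
      · intro x hx
        simp only [List.mem_append, List.mem_singleton] at hx
        rcases hx with (hx | hx) | hx
        · exact ⟨c, b, hcb, hx⟩
        · exact hl1 x hx
        · exact ⟨c, b, hcb, hx⟩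
      · simp only [List.length_append, List.length_singleton, hl2]; omega
      · have key : Equiv.swap c b * Equiv.swap a c * Equiv.swap c b = Equiv.swap a b := by
          have h1 : Equiv.swap c b a = a :=
            Equiv.swap_apply_of_ne_of_ne hac hab
          have h2 : Equiv.swap c b c = b := Equiv.swap_apply_left c b
          calc Equiv.swap c b * Equiv.swap a c * Equiv.swap c b
              = Equiv.swap c b * Equiv.swap a c * (Equiv.swap c b)⁻¹ := by
                rw [Equiv.swap_inv]
            _ = Equiv.swap (Equiv.swap c b a) (Equiv.swap c b c) :=
                (Equiv.swap_apply_apply _ a c).symm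
            _ = Equiv.swap a b := by rw [h1, h2]
        simp only [List.prod_append, List.prod_cons, List.prod_nil, hl3, mul_one]
        rw [← key, mul_assoc]

lemma swap_word {n : ℕ} (a b : Fin n) (h : a ≠ b) :
    ∃ l : List (Equiv.Perm (Fin n)), (∀ x ∈ l, x ∈ coxeterGens n) ∧
      l.length ≤ 2 * n - 3 ∧ l.prod = Equiv.swap a b := by
  rcases Nat.lt_or_ge (a : ℕ) (b : ℕ) with hlt | hge
  · obtain ⟨l, h1, h2, h3⟩ := swap_word_aux ((b : ℕ) - (a : ℕ)) (by omega) a b (by omega)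
    exact ⟨l, h1, by have := b.isLt; omega, h3⟩
  · have hlt : (b : ℕ) < (a : ℕ) := by
      rcases Nat.lt_or_ge (b : ℕ) (a : ℕ) with h' | h'
      · exact h'
      · exact absurd (Fin.ext (le_antisymm hge h')) h.symm
    obtain ⟨l, h1, h2, h3⟩ := swap_word_aux ((a : ℕ) - (b : ℕ)) (by omega) b a (by omega)
    exact ⟨l, h1, by have := a.isLt; omega, by rw [h3, Equiv.swap_comm]⟩

end pieces

lemma conj_swap {n : ℕ} (g : Equiv.Perm (Fin n)) (a b : Fin n) :
    g⁻¹ * Equiv.swap a b * g = Equiv.swap (g⁻¹ a) (g⁻¹ b) := by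
  rw [Equiv.swap_apply_apply g⁻¹ a b, inv_inv]

lemma wordLen_le {n : ℕ} {x : Equiv.Perm (Fin n)} {l : List (Equiv.Perm (Fin n))}
    (h1 : ∀ y ∈ l, y ∈ coxeterGens n) (h3 : l.prod = x) :
    wordLen (coxeterGens n) x ≤ l.length :=
  Nat.sInf_le ⟨l, h1, rfl, h3⟩

lemma inv_le_wordLen {n : ℕ} {x : Equiv.Perm (Fin n)} {l0 : List (Equiv.Perm (Fin n))}
    (h01 : ∀ y ∈ l0, y ∈ coxeterGens n) (h02 : l0.prod = x) :
    (invSet x).card ≤ wordLen (coxeterGens n) x := by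
  have hne : {k | ∃ l : List (Equiv.Perm (Fin n)),
      (∀ y ∈ l, y ∈ coxeterGens n) ∧ l.length = k ∧ l.prod = x}.Nonempty :=
    ⟨l0.length, l0, h01, rfl, h02⟩
  obtain ⟨l, hl1, hl2, hl3⟩ := Nat.sInf_mem hne
  calc (invSet x).card = (invSet l.prod).card := by rw [hl3]
    _ ≤ l.length := invCount_prod_le l hl1
    _ = wordLen (coxeterGens n) x := hl2

lemma mem_bound {n : ℕ} (hn : 7 ≤ n) {m : ℕ}
    (hm : m ∈ {m | ∃ g : Equiv.Perm (Fin n), ∃ s ∈ coxeterGens n, ∃ s' ∈ coxeterGens n,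
        m = wordLen (coxeterGens n) (g⁻¹ * (s * s') * g)}) : m ≤ 4 * n - 6 := by
  obtain ⟨g, s, hs, s', hs', rfl⟩ := hm
  obtain ⟨i, j, hj, rfl⟩ := hs
  obtain ⟨i', j', hj', rfl⟩ := hs'
  have hij : i ≠ j := Fin.ne_of_val_ne (by omega)
  have hij' : i' ≠ j' := Fin.ne_of_val_ne (by omega)
  have hrw : g⁻¹ * (Equiv.swap i j * Equiv.swap i' j') * g
      = Equiv.swap (g⁻¹ i) (g⁻¹ j) * Equiv.swap (g⁻¹ i') (g⁻¹ j') := by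
    rw [← conj_swap, ← conj_swap]; group
  obtain ⟨l1, a1, b1, c1⟩ := swap_word (g⁻¹ i) (g⁻¹ j) (fun e => hij (g⁻¹.injective e))
  obtain ⟨l2, a2, b2, c2⟩ := swap_word (g⁻¹ i') (g⁻¹ j') (fun e => hij' (g⁻¹.injective e))
  have hw : wordLen (coxeterGens n) (g⁻¹ * (Equiv.swap i j * Equiv.swap i' j') * g)
      ≤ (l1 ++ l2).length := by
    apply wordLen_le
    · intro y hy
      rcases List.mem_append.1 hy with hy | hy
      · exact a1 y hy
      · exact a2 y hy
    · rw [List.prod_append, c1, c2, hrw]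
  rw [List.length_append] at hw
  omega
/-- for `n ≥ 7`, `2n − 2 ≤ λ₂(Σ_n, C_n) ≤ 4n − 6`. -/
theorem stmt_15 (n : ℕ) (hn : 7 ≤ n) :
    2 * n - 2 ≤ lam2 (coxeterGens n) ∧ lam2 (coxeterGens n) ≤ 4 * n - 6 := by
  set S := {m | ∃ g : Equiv.Perm (Fin n), ∃ s ∈ coxeterGens n, ∃ s' ∈ coxeterGens n,
      m = wordLen (coxeterGens n) (g⁻¹ * (s * s') * g)} with hSdef
  have hlam : lam2 (coxeterGens n) = sSup S := rfl
  obtain ⟨z, hz⟩ : ∃ x : Fin n, (x : ℕ) = 0 := ⟨⟨0, by omega⟩, rfl⟩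
  obtain ⟨o, ho⟩ : ∃ x : Fin n, (x : ℕ) = 1 := ⟨⟨1, by omega⟩, rfl⟩
  obtain ⟨t, ht⟩ : ∃ x : Fin n, (x : ℕ) = 2 := ⟨⟨2, by omega⟩, rfl⟩
  obtain ⟨th, hth⟩ : ∃ x : Fin n, (x : ℕ) = 3 := ⟨⟨3, by omega⟩, rfl⟩
  obtain ⟨e1, he1⟩ : ∃ x : Fin n, (x : ℕ) = n - 1 := ⟨⟨n - 1, by omega⟩, rfl⟩
  have NE : ∀ a b : Fin n, (a : ℕ) ≠ (b : ℕ) → a ≠ b :=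
    fun a b h e => h (congrArg Fin.val e)
  have hzo : z ≠ o := NE _ _ (by omega)
  have hzt : z ≠ t := NE _ _ (by omega)
  have hzth : z ≠ th := NE _ _ (by omega)
  have hze1 : z ≠ e1 := NE _ _ (by omega)
  have hot : o ≠ t := NE _ _ (by omega)
  have hoth : o ≠ th := NE _ _ (by omega)
  have hoe1 : o ≠ e1 := NE _ _ (by omega)
  have htth : t ≠ th := NE _ _ (by omega)
  have hte1 : t ≠ e1 := NE _ _ (by omega)
  have hthe1 : th ≠ e1 := NE _ _ (by omega)
  set σ₀ : Equiv.Perm (Fin n) := Equiv.swap z e1 * Equiv.swap o t with hσ₀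
  have vz : σ₀ z = e1 := by
    rw [hσ₀, Equiv.Perm.mul_apply, Equiv.swap_apply_of_ne_of_ne hzo hzt,
      Equiv.swap_apply_left]
  have ve1 : σ₀ e1 = z := by
    rw [hσ₀, Equiv.Perm.mul_apply, Equiv.swap_apply_of_ne_of_ne hoe1.symm hte1.symm,
      Equiv.swap_apply_right]
  have vo : σ₀ o = t := by
    rw [hσ₀, Equiv.Perm.mul_apply, Equiv.swap_apply_left,
      Equiv.swap_apply_of_ne_of_ne hzt.symm hte1]
  have vt : σ₀ t = o := by
    rw [hσ₀, Equiv.Perm.mul_apply, Equiv.swap_apply_right,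
      Equiv.swap_apply_of_ne_of_ne hzo.symm hoe1]
  -- a word representing σ₀
  obtain ⟨l1, a1, b1, c1⟩ := swap_word z e1 hze1
  obtain ⟨l2, a2, b2, c2⟩ := swap_word o t hot
  have hwordmem : ∀ y ∈ l1 ++ l2, y ∈ coxeterGens n := by
    intro y hy
    rcases List.mem_append.1 hy with hy | hy
    exacts [a1 y hy, a2 y hy]
  have hword : (l1 ++ l2).prod = σ₀ := by
    rw [List.prod_append, c1, c2]
  -- three families of inversions of σ₀
  set A1 : Finset (Fin n × Fin n) :=
    (Finset.univ.erase z).image (fun y => (z, y)) with hA1def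
  set A2 : Finset (Fin n × Fin n) :=
    ((Finset.univ.erase e1).erase z).image (fun x => (x, e1)) with hA2def
  set A3 : Finset (Fin n × Fin n) := {(o, t)} with hA3def
  have hA1 : A1 ⊆ invSet σ₀ := by
    intro q hq
    obtain ⟨y, hy, rfl⟩ := Finset.mem_image.1 hq
    have hy' : y ≠ z := (Finset.mem_erase.1 hy).1
    have hyv : (y : ℕ) ≠ 0 := fun e => hy' (Fin.ext (by rw [e, hz]))
    have h1 : z < y := by rw [Fin.lt_def]; omega
    have h2 : σ₀ y < σ₀ z := by
      have hne : σ₀ y ≠ e1 := by rw [← vz]; exact fun e => hy' (σ₀.injective e)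
      have hvne : (σ₀ y : ℕ) ≠ n - 1 := fun e => hne (Fin.ext (by rw [e, he1]))
      have hlt := (σ₀ y).isLt
      rw [vz, Fin.lt_def]
      omega
    simp only [invSet, Finset.mem_filter, Finset.mem_univ, true_and]
    exact ⟨h1, h2⟩
  have hA2 : A2 ⊆ invSet σ₀ := by
    intro q hq
    obtain ⟨x, hx, rfl⟩ := Finset.mem_image.1 hq
    have hx1 : x ≠ z := (Finset.mem_erase.1 hx).1
    have hx2 : x ≠ e1 := (Finset.mem_erase.1 (Finset.mem_erase.1 hx).2).1
    have hxv : (x : ℕ) ≠ n - 1 := fun e => hx2 (Fin.ext (by rw [e, he1]))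
    have hlt := x.isLt
    have h1 : x < e1 := by rw [Fin.lt_def]; omega
    have h2 : σ₀ e1 < σ₀ x := by
      have hne : σ₀ x ≠ z := by rw [← ve1]; exact fun e => hx2 (σ₀.injective e)
      have hvne : (σ₀ x : ℕ) ≠ 0 := fun e => hne (Fin.ext (by rw [e, hz]))
      rw [ve1, Fin.lt_def]
      omega
    simp only [invSet, Finset.mem_filter, Finset.mem_univ, true_and]
    exact ⟨h1, h2⟩
  have hA3 : A3 ⊆ invSet σ₀ := by
    intro q hq
    rw [hA3def, Finset.mem_singleton] at hq
    subst hq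
    simp only [invSet, Finset.mem_filter, Finset.mem_univ, true_and]
    constructor
    · rw [Fin.lt_def]; omega
    · rw [vo, vt, Fin.lt_def]; omega
  have cardA1 : A1.card = n - 1 := by
    rw [hA1def, Finset.card_image_of_injective _ (fun a b h => congrArg Prod.snd h),
      Finset.card_erase_of_mem (Finset.mem_univ z), Finset.card_univ, Fintype.card_fin]
  have cardA2 : A2.card = n - 2 := by
    rw [hA2def, Finset.card_image_of_injective _ (fun a b h => congrArg Prod.fst h),
      Finset.card_erase_of_mem
        (Finset.mem_erase.2 ⟨hze1, Finset.mem_univ z⟩),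
      Finset.card_erase_of_mem (Finset.mem_univ e1), Finset.card_univ, Fintype.card_fin]
    omega
  have cardA3 : A3.card = 1 := by rw [hA3def, Finset.card_singleton]
  have d12 : Disjoint A1 A2 := by
    rw [Finset.disjoint_left]
    intro q hq1 hq2
    obtain ⟨y, _, rfl⟩ := Finset.mem_image.1 hq1
    obtain ⟨x, hx, he⟩ := Finset.mem_image.1 hq2
    have : x = z := congrArg Prod.fst he
    exact (Finset.mem_erase.1 hx).1 this
  have d123 : Disjoint (A1 ∪ A2) A3 := by
    rw [Finset.disjoint_right]
    intro q hq3 hq12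
    rw [hA3def, Finset.mem_singleton] at hq3
    subst hq3
    rcases Finset.mem_union.1 hq12 with h | h
    · obtain ⟨y, _, he⟩ := Finset.mem_image.1 h
      exact hzo (congrArg Prod.fst he)
    · obtain ⟨x, _, he⟩ := Finset.mem_image.1 h
      exact hte1 ((congrArg Prod.snd he).symm)
  have hBsub : A1 ∪ A2 ∪ A3 ⊆ invSet σ₀ :=
    Finset.union_subset (Finset.union_subset hA1 hA2) hA3
  have hInv : 2 * n - 2 ≤ (invSet σ₀).card := by
    have hcard : (A1 ∪ A2 ∪ A3).card = (n - 1) + (n - 2) + 1 := by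
      rw [Finset.card_union_of_disjoint d123, Finset.card_union_of_disjoint d12,
        cardA1, cardA2, cardA3]
    have := Finset.card_le_card hBsub
    omega
  -- σ₀ is a conjugate of a product of two generators
  set p : Equiv.Perm (Fin n) :=
    Equiv.swap th t * (Equiv.swap t o * Equiv.swap o e1) with hp
  have pz : p z = z := by
    simp only [hp, Equiv.Perm.mul_apply]
    rw [Equiv.swap_apply_of_ne_of_ne hzo hze1, Equiv.swap_apply_of_ne_of_ne hzt hzo,
      Equiv.swap_apply_of_ne_of_ne hzth hzt]
  have po : p o = e1 := by
    simp only [hp, Equiv.Perm.mul_apply]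
    rw [Equiv.swap_apply_left, Equiv.swap_apply_of_ne_of_ne hte1.symm hoe1.symm,
      Equiv.swap_apply_of_ne_of_ne hthe1.symm hte1.symm]
  have pt : p t = o := by
    simp only [hp, Equiv.Perm.mul_apply]
    rw [Equiv.swap_apply_of_ne_of_ne hot.symm hte1, Equiv.swap_apply_left,
      Equiv.swap_apply_of_ne_of_ne hoth hot]
  have pth : p th = t := by
    simp only [hp, Equiv.Perm.mul_apply]
    rw [Equiv.swap_apply_of_ne_of_ne hoth.symm hthe1,
      Equiv.swap_apply_of_ne_of_ne htth.symm hoth.symm, Equiv.swap_apply_left]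
  have hps : p * (Equiv.swap z o * Equiv.swap t th) * p⁻¹ = σ₀ := by
    have h1 : Equiv.swap (p z) (p o) = p * Equiv.swap z o * p⁻¹ :=
      Equiv.swap_apply_apply p z o
    have h2 : Equiv.swap (p t) (p th) = p * Equiv.swap t th * p⁻¹ :=
      Equiv.swap_apply_apply p t th
    rw [pz, po] at h1
    rw [pt, pth] at h2
    rw [hσ₀, h1, h2]
    group
  have hm₀S : wordLen (coxeterGens n) σ₀ ∈ S := by
    refine ⟨p⁻¹, Equiv.swap z o, ⟨z, o, by omega, rfl⟩,
      Equiv.swap t th, ⟨t, th, by omega, rfl⟩, ?_⟩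
    rw [inv_inv, hps]
  have bdd : BddAbove S := ⟨4 * n - 6, fun m hm => mem_bound hn hm⟩
  constructor
  · calc 2 * n - 2 ≤ (invSet σ₀).card := hInv
      _ ≤ wordLen (coxeterGens n) σ₀ := inv_le_wordLen hwordmem hword
      _ ≤ lam2 (coxeterGens n) := by rw [hlam]; exact le_csSup bdd hm₀S
  · rw [hlam]
    refine csSup_le ⟨wordLen (coxeterGens n) ((1 : Equiv.Perm (Fin n))⁻¹ *
      (Equiv.swap z o * Equiv.swap z o) * 1), 1, Equiv.swap z o, ⟨z, o, by omega, rfl⟩,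
      Equiv.swap z o, ⟨z, o, by omega, rfl⟩, rfl⟩ (fun m hm => mem_bound hn hm)
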